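/- arXiv:1305.5305 — 4 statements merged into one kernel-verified Lean document; each statement's English description precedes it below -/
import Mathlib

section
/- Let D > 0, D̂ : ℝ → ℝ differentiable with D̂(t) ≠ 0 for all t, and U : ℝ → ℝ differentiable. Define u(x,t) = U(t + D(x−1)), û(x,t) = U(t + D̂(t)(x−1)), ũ = u − û, and D̃(t) = D − D̂(t). Then for all x ∈ [0,1], t ∈ ℝ: D·∂ũ/∂t(x,t) = ∂ũ/∂x(x,t) − (D̃(t)/D̂(t))·∂û/∂x(x,t) − D̂'(t)·(D/D̂(t))·(x−1)·∂û/∂x(x,t). -/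
/-- Governing transport equation of the distributed input estimation error
`ũ = u - û`, where `u(x,t) = U(t + D(x-1))` and `û(x,t) = U(t + D̂(t)(x-1))`:
`D ∂ũ/∂t = ∂ũ/∂x - (D̃(t)/D̂(t)) ∂û/∂x - D̂'(t)(D/D̂(t))(x-1) ∂û/∂x`,
with delay estimation error `D̃(t) = D - D̂(t)`. -/
theorem statement_5 (D : ℝ) (hD : 0 < D) (Dhat : ℝ → ℝ)
    (hDhat : Differentiable ℝ Dhat) (hDhat0 : ∀ t : ℝ, Dhat t ≠ 0)
    (U : ℝ → ℝ) (hU : Differentiable ℝ U)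
    (u uhat utilde : ℝ → ℝ → ℝ) (Dtilde : ℝ → ℝ)
    (hu : ∀ (x t : ℝ), u x t = U (t + D * (x - 1)))
    (huhat : ∀ (x t : ℝ), uhat x t = U (t + Dhat t * (x - 1)))
    (hutilde : ∀ (x t : ℝ), utilde x t = u x t - uhat x t)
    (hDtilde : ∀ t : ℝ, Dtilde t = D - Dhat t) :
    ∀ x ∈ Set.Icc (0:ℝ) 1, ∀ t : ℝ,
      D * deriv (fun s : ℝ => utilde x s) t =
        deriv (fun y : ℝ => utilde y t) x
          - (Dtilde t / Dhat t) * deriv (fun y : ℝ => uhat y t) x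
          - deriv Dhat t * (D / Dhat t) * (x - 1) * deriv (fun y : ℝ => uhat y t) x := by
  intro x hx t
  set a := t + D * (x - 1) with ha
  set b := t + Dhat t * (x - 1) with hb
  -- time derivative of u at (x, ·)
  have hu_t : HasDerivAt (fun s : ℝ => U (s + D * (x - 1))) (deriv U a) t := by
    have hinner : HasDerivAt (fun s : ℝ => s + D * (x - 1)) 1 t :=
      (hasDerivAt_id t).add_const _
    simpa [Function.comp_def] using ((hU a).hasDerivAt.comp t hinner)
  have huhat_t : HasDerivAt (fun s : ℝ => U (s + Dhat s * (x - 1)))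
      (deriv U b * (1 + deriv Dhat t * (x - 1))) t := by
    have hinner : HasDerivAt (fun s : ℝ => s + Dhat s * (x - 1))
        (1 + deriv Dhat t * (x - 1)) t :=
      (hasDerivAt_id t).add ((hDhat t).hasDerivAt.mul_const _)
    simpa [Function.comp_def] using ((hU b).hasDerivAt.comp t hinner)
  have hu_x : HasDerivAt (fun y : ℝ => U (t + D * (y - 1))) (deriv U a * D) x := by
    have hinner : HasDerivAt (fun y : ℝ => t + D * (y - 1)) D x := by
      simpa using (((hasDerivAt_id x).sub_const 1).const_mul D).const_add t
    simpa [Function.comp_def] using ((hU a).hasDerivAt.comp x hinner)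
  have huhat_x : HasDerivAt (fun y : ℝ => U (t + Dhat t * (y - 1))) (deriv U b * Dhat t) x := by
    have hinner : HasDerivAt (fun y : ℝ => t + Dhat t * (y - 1)) (Dhat t) x := by
      simpa using (((hasDerivAt_id x).sub_const 1).const_mul (Dhat t)).const_add t
    simpa [Function.comp_def] using ((hU b).hasDerivAt.comp x hinner)
  have e1 : deriv (fun s : ℝ => utilde x s) t
      = deriv U a - deriv U b * (1 + deriv Dhat t * (x - 1)) := by
    have : (fun s : ℝ => utilde x s)
        = fun s : ℝ => U (s + D * (x - 1)) - U (s + Dhat s * (x - 1)) := by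
      funext s; rw [hutilde, hu, huhat]
    rw [this]
    exact (hu_t.sub huhat_t).deriv
  have e2 : deriv (fun y : ℝ => utilde y t)
      x = deriv U a * D - deriv U b * Dhat t := by
    have : (fun y : ℝ => utilde y t)
        = fun y : ℝ => U (t + D * (y - 1)) - U (t + Dhat t * (y - 1)) := by
      funext y; rw [hutilde, hu, huhat]
    rw [this]
    exact (hu_x.sub huhat_x).deriv
  have e3 : deriv (fun y : ℝ => uhat y t) x = deriv U b * Dhat t := by
    have : (fun y : ℝ => uhat y t) = fun y : ℝ => U (t + Dhat t * (y - 1)) := by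
      funext y; rw [huhat]
    rw [this]
    exact huhat_x.deriv
  rw [e1, e2, e3, hDtilde]
  field_simp [hDhat0 t]
  ring
end

section
/- Fix t ∈ ℝ. Let f : ℝⁿ × ℝ → ℝⁿ be continuously differentiable, D̂(t), D̂'(t) ∈ ℝ, and let p̂(·,t), û(·,t), u(·,t), ∂p̂/∂t(·,t), ∂û/∂t(·,t), ∂p̂/∂x(·,t), ∂û/∂x(·,t) be functions on [0,1] (with values in ℝⁿ or ℝ as appropriate) such that: (a) ∂p̂/∂x(x,t) = D̂(t)·f(p̂(x,t), û(x,t)) for all x; (b) ∂p̂/∂t(x,t) = f(p̂(0,t), u(0,t)) + D̂'(t)∫₀ˣ f(p̂,û) dy + D̂(t)∫₀ˣ [∂f/∂p(p̂,û)·∂p̂/∂t + ∂f/∂u(p̂,û)·∂û/∂t] dy for all x; (c) D̂(t)·∂û/∂t(y,t) = (1 + D̂'(t)(y−1))·∂û/∂x(y,t) for all y; and (d) all the maps of y appearing under the integrals are integrable on [0,1]. Define r(x) = D̂(t)·∂p̂/∂t(x,t) − ∂p̂/∂x(x,t). Then for all x ∈ [0,1]: r(x) = D̂(t)·[f(p̂(0,t),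 u(0,t)) − f(p̂(0,t), û(0,t))] + D̂'(t)D̂(t)·∫₀ˣ f(p̂(y,t), û(y,t)) dy + D̂(t)·∫₀ˣ ∂f/∂p(p̂(y,t), û(y,t))·r(y) dy + D̂'(t)D̂(t)·∫₀ˣ ∂f/∂u(p̂(y,t), û(y,t))·(y−1)·∂û/∂x(y,t) dy, provided additionally that ∂p̂/∂x(x,t) = D̂(t)f(p̂(0,t),û(0,t)) + D̂(t)∫₀ˣ [∂f/∂p(p̂,û)·∂p̂/∂x + ∂f/∂u(p̂,û)·∂û/∂x] dy for all x (the fundamental-theorem-of-calculus expansion of (a)). -/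
/-- Volterra integral equation for the transport defect
`r(x) = D̂ ∂p̂/∂t(x) - ∂p̂/∂x(x)` of the distributed predictor estimate at a fixed time:
`r(x) = D̂ [f(p̂(0),u(0)) - f(p̂(0),û(0))] + D̂'D̂ ∫₀ˣ f(p̂,û) dy
  + D̂ ∫₀ˣ ∂f/∂p(p̂,û)·r dy + D̂'D̂ ∫₀ˣ ∂f/∂u(p̂,û)·(y-1)·∂û/∂x dy`. -/
theorem statement_8 (n : ℕ) (f : (Fin n → ℝ) × ℝ → (Fin n → ℝ))
    (hf : ContDiff ℝ 1 f)
    (Dhat Dhat' : ℝ) (u0 : ℝ)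
    (phat phatt phatx : ℝ → (Fin n → ℝ)) (uhat uhatt uhatx : ℝ → ℝ)
    -- (a) spatial ODE of the predictor
    (ha : ∀ x ∈ Set.Icc (0:ℝ) 1, phatx x = Dhat • f (phat x, uhat x))
    -- (b) Leibniz formula for the time derivative of the predictor
    (hb : ∀ x ∈ Set.Icc (0:ℝ) 1,
      phatt x = f (phat 0, u0)
        + Dhat' • (∫ y in (0:ℝ)..x, f (phat y, uhat y))
        + Dhat • ∫ y in (0:ℝ)..x,
            (fderiv ℝ (fun p => f (p, uhat y)) (phat y) (phatt y)
              + fderiv ℝ (fun v : ℝ => f (phat y, v)) (uhat y) (uhatt y)))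
    -- (c) transport-type PDE of the distributed input estimate
    (hc : ∀ y ∈ Set.Icc (0:ℝ) 1, Dhat * uhatt y = (1 + Dhat' * (y - 1)) * uhatx y)
    -- (d) integrability of all the maps appearing under the integrals
    (hd1 : IntervalIntegrable (fun y => f (phat y, uhat y)) MeasureTheory.volume 0 1)
    (hd2 : IntervalIntegrable
      (fun y => fderiv ℝ (fun p => f (p, uhat y)) (phat y) (phatt y))
      MeasureTheory.volume 0 1)
    (hd3 : IntervalIntegrable
      (fun y => fderiv ℝ (fun v : ℝ => f (phat y, v)) (uhat y) (uhatt y))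
      MeasureTheory.volume 0 1)
    (hd4 : IntervalIntegrable
      (fun y => fderiv ℝ (fun p => f (p, uhat y)) (phat y) (phatx y))
      MeasureTheory.volume 0 1)
    (hd5 : IntervalIntegrable
      (fun y => fderiv ℝ (fun v : ℝ => f (phat y, v)) (uhat y) (uhatx y))
      MeasureTheory.volume 0 1)
    (hd6 : IntervalIntegrable
      (fun y => fderiv ℝ (fun p => f (p, uhat y)) (phat y) (Dhat • phatt y - phatx y))
      MeasureTheory.volume 0 1)
    (hd7 : IntervalIntegrable
      (fun y => fderiv ℝ (fun v : ℝ => f (phat y, v)) (uhat y) ((y - 1) * uhatx y))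
      MeasureTheory.volume 0 1)
    -- the fundamental-theorem-of-calculus expansion of (a)
    (hftc : ∀ x ∈ Set.Icc (0:ℝ) 1,
      phatx x = Dhat • f (phat 0, uhat 0)
        + Dhat • ∫ y in (0:ℝ)..x,
            (fderiv ℝ (fun p => f (p, uhat y)) (phat y) (phatx y)
              + fderiv ℝ (fun v : ℝ => f (phat y, v)) (uhat y) (uhatx y))) :
    ∀ x ∈ Set.Icc (0:ℝ) 1,
      Dhat • phatt x - phatx x =
        Dhat • (f (phat 0, u0) - f (phat 0, uhat 0))
          + (Dhat' * Dhat) • (∫ y in (0:ℝ)..x, f (phat y, uhat y))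
          + Dhat • (∫ y in (0:ℝ)..x,
              fderiv ℝ (fun p => f (p, uhat y)) (phat y) (Dhat • phatt y - phatx y))
          + (Dhat' * Dhat) • ∫ y in (0:ℝ)..x,
              fderiv ℝ (fun v : ℝ => f (phat y, v)) (uhat y) ((y - 1) * uhatx y) := by
  intro x hx
  have hsub' : Set.uIcc (0:ℝ) x ⊆ Set.uIcc (0:ℝ) 1 := by
    rw [Set.uIcc_of_le hx.1, Set.uIcc_of_le (zero_le_one)]
    exact Set.Icc_subset_Icc le_rfl hx.2
  have hsub : Set.uIcc (0:ℝ) x ⊆ Set.Icc (0:ℝ) 1 := by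
    rw [Set.uIcc_of_le hx.1]
    exact Set.Icc_subset_Icc le_rfl hx.2
  have hA : IntervalIntegrable (fun y =>
      fderiv ℝ (fun p => f (p, uhat y)) (phat y) (phatt y)
        + fderiv ℝ (fun v : ℝ => f (phat y, v)) (uhat y) (uhatt y))
      MeasureTheory.volume 0 x := (hd2.mono_set hsub').add (hd3.mono_set hsub')
  have hB : IntervalIntegrable (fun y =>
      fderiv ℝ (fun p => f (p, uhat y)) (phat y) (phatx y)
        + fderiv ℝ (fun v : ℝ => f (phat y, v)) (uhat y) (uhatx y))
      MeasureTheory.volume 0 x := (hd4.mono_set hsub').add (hd5.mono_set hsub')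
  have hptw : Set.EqOn
      (fun y => Dhat • (fderiv ℝ (fun p => f (p, uhat y)) (phat y) (phatt y)
          + fderiv ℝ (fun v : ℝ => f (phat y, v)) (uhat y) (uhatt y))
        - (fderiv ℝ (fun p => f (p, uhat y)) (phat y) (phatx y)
          + fderiv ℝ (fun v : ℝ => f (phat y, v)) (uhat y) (uhatx y)))
      (fun y => fderiv ℝ (fun p => f (p, uhat y)) (phat y) (Dhat • phatt y - phatx y)
        + Dhat' • fderiv ℝ (fun v : ℝ => f (phat y, v)) (uhat y) ((y - 1) * uhatx y))
      (Set.uIcc 0 x) := by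
    intro y hy
    have hcy := hc y (hsub hy)
    simp only
    rw [(fderiv ℝ (fun p => f (p, uhat y)) (phat y)).map_sub,
        (fderiv ℝ (fun p => f (p, uhat y)) (phat y)).map_smul]
    have h1 : Dhat • fderiv ℝ (fun v : ℝ => f (phat y, v)) (uhat y) (uhatt y)
        = fderiv ℝ (fun v : ℝ => f (phat y, v)) (uhat y) (uhatx y)
          + Dhat' • fderiv ℝ (fun v : ℝ => f (phat y, v)) (uhat y) ((y - 1) * uhatx y) := by
      rw [← (fderiv ℝ (fun v : ℝ => f (phat y, v)) (uhat y)).map_smul,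
          ← (fderiv ℝ (fun v : ℝ => f (phat y, v)) (uhat y)).map_smul,
          ← (fderiv ℝ (fun v : ℝ => f (phat y, v)) (uhat y)).map_add]
      congr 1
      simp only [smul_eq_mul]
      rw [hcy]; ring
    rw [smul_add, h1]
    abel
  have hI : (∫ y in (0:ℝ)..x,
        (Dhat • (fderiv ℝ (fun p => f (p, uhat y)) (phat y) (phatt y)
            + fderiv ℝ (fun v : ℝ => f (phat y, v)) (uhat y) (uhatt y))
          - (fderiv ℝ (fun p => f (p, uhat y)) (phat y) (phatx y)
            + fderiv ℝ (fun v : ℝ => f (phat y, v)) (uhat y) (uhatx y))))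
      = (∫ y in (0:ℝ)..x,
          fderiv ℝ (fun p => f (p, uhat y)) (phat y) (Dhat • phatt y - phatx y))
        + Dhat' • ∫ y in (0:ℝ)..x,
            fderiv ℝ (fun v : ℝ => f (phat y, v)) (uhat y) ((y - 1) * uhatx y) := by
    have hint7 : IntervalIntegrable
        (fun y => Dhat' • fderiv ℝ (fun v : ℝ => f (phat y, v)) (uhat y) ((y - 1) * uhatx y))
        MeasureTheory.volume 0 x := (hd7.mono_set hsub').smul Dhat'
    rw [intervalIntegral.integral_congr hptw,
        intervalIntegral.integral_add (hd6.mono_set hsub') hint7,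
        intervalIntegral.integral_smul]
  have h2 : Dhat • (Dhat • ∫ y in (0:ℝ)..x,
        (fderiv ℝ (fun p => f (p, uhat y)) (phat y) (phatt y)
          + fderiv ℝ (fun v : ℝ => f (phat y, v)) (uhat y) (uhatt y)))
      - Dhat • ∫ y in (0:ℝ)..x,
        (fderiv ℝ (fun p => f (p, uhat y)) (phat y) (phatx y)
          + fderiv ℝ (fun v : ℝ => f (phat y, v)) (uhat y) (uhatx y))
      = Dhat • (∫ y in (0:ℝ)..x,
          fderiv ℝ (fun p => f (p, uhat y)) (phat y) (Dhat • phatt y - phatx y))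
        + (Dhat' * Dhat) • ∫ y in (0:ℝ)..x,
            fderiv ℝ (fun v : ℝ => f (phat y, v)) (uhat y) ((y - 1) * uhatx y) := by
    have hAs : IntervalIntegrable (fun y =>
        Dhat • (fderiv ℝ (fun p => f (p, uhat y)) (phat y) (phatt y)
          + fderiv ℝ (fun v : ℝ => f (phat y, v)) (uhat y) (uhatt y)))
        MeasureTheory.volume 0 x := hA.smul Dhat
    rw [← smul_sub, ← intervalIntegral.integral_smul,
        ← intervalIntegral.integral_sub hAs hB, hI, smul_add, smul_smul,
        mul_comm Dhat Dhat']
  rw [hb x hx, hftc x hx]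
  rw [smul_add, smul_add, smul_smul, sub_add_eq_sub_sub]
  rw [smul_sub]
  rw [mul_comm Dhat Dhat']
  calc Dhat • f (phat 0, u0)
        + (Dhat' * Dhat) • (∫ y in (0:ℝ)..x, f (phat y, uhat y))
        + Dhat • (Dhat • ∫ y in (0:ℝ)..x,
            (fderiv ℝ (fun p => f (p, uhat y)) (phat y) (phatt y)
              + fderiv ℝ (fun v : ℝ => f (phat y, v)) (uhat y) (uhatt y)))
        - Dhat • f (phat 0, uhat 0)
        - Dhat • ∫ y in (0:ℝ)..x,
            (fderiv ℝ (fun p => f (p, uhat y)) (phat y) (phatx y)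
              + fderiv ℝ (fun v : ℝ => f (phat y, v)) (uhat y) (uhatx y))
      = (Dhat • f (phat 0, u0) - Dhat • f (phat 0, uhat 0))
        + (Dhat' * Dhat) • (∫ y in (0:ℝ)..x, f (phat y, uhat y))
        + (Dhat • (Dhat • ∫ y in (0:ℝ)..x,
            (fderiv ℝ (fun p => f (p, uhat y)) (phat y) (phatt y)
              + fderiv ℝ (fun v : ℝ => f (phat y, v)) (uhat y) (uhatt y)))
          - Dhat • ∫ y in (0:ℝ)..x,
            (fderiv ℝ (fun p => f (p, uhat y)) (phat y) (phatx y)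
              + fderiv ℝ (fun v : ℝ => f (phat y, v)) (uhat y) (uhatx y))) := by abel
    _ = _ := by rw [h2, ← smul_sub]; abel
end

section
/- Fix (x,t) ∈ [0,1] × ℝ. Let κ : ℝⁿ → ℝ be differentiable, and suppose: (a) û is differentiable in t and x at (x,t) with D̂(t)·∂û/∂t(x,t) = ∂û/∂x(x,t) + D̂'(t)(x−1)·∂û/∂x(x,t); (b) p̂ is differentiable in t and x at (x,t) with D̂(t)·∂p̂/∂t(x,t) = ∂p̂/∂x(x,t) + Φ(x,0)·D̂(t)·f_ũ(t) + D̂'(t)D̂(t)·∫₀ˣ Φ(x,y)·[f(p̂(y,t),û(y,t)) + ∂f/∂u(p̂(y,t),û(y,t))·(y−1)·∂û/∂x(y,t)] dy; and define ŵ(x,t) = û(x,t) − κ(p̂(x,t)). Then D̂(t)·∂ŵ/∂t(x,t) = ∂ŵ/∂x(x,t) + D̂'(t)·(x−1)·∂û/∂x(x,t) − Dκ(p̂(x,t))·[ Φ(x,0)·D̂(t)·f_ũ(t) + D̂'(t)D̂(t)·∫₀ˣ Φ(x,y)·( f(p̂(y,t),û(y,t)) + ∂f/∂u(p̂(y,t),û(y,t))·(y−1)·∂û/∂x(y,t)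 ) dy ], where Dκ denotes the derivative of κ. -/
attribute [local instance] Matrix.normedAddCommGroup Matrix.normedSpace

/-- Governing transport-type equation of the backstepping variable
`ŵ(x,t) = û(x,t) - κ(p̂(x,t))`: from the governing equations of `û` and `p̂`
one gets, by the chain rule,
`D̂ ∂ŵ/∂t = ∂ŵ/∂x + D̂'(x-1)∂û/∂x - Dκ(p̂)[Φ(x,0) D̂ f_ũ
  + D̂'D̂ ∫₀ˣ Φ(x,y)(f(p̂,û) + ∂f/∂u(p̂,û)(y-1)∂û/∂x) dy]`. -/
theorem statement_12 (n : ℕ) (f : (Fin n → ℝ) × ℝ → (Fin n → ℝ))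
    (κ : (Fin n → ℝ) → ℝ) (hκ : Differentiable ℝ κ)
    (x t : ℝ) (hx : x ∈ Set.Icc (0:ℝ) 1)
    (Dhat Dhat' : ℝ) (u uhat : ℝ → ℝ → ℝ) (phat : ℝ → ℝ → (Fin n → ℝ))
    (futilde : Fin n → ℝ)
    (hfutilde : futilde = f (phat 0 t, u 0 t) - f (phat 0 t, uhat 0 t))
    (Φ : ℝ → ℝ → Matrix (Fin n) (Fin n) ℝ)
    -- (a) û is differentiable in t and x at (x,t) and satisfies its transport equation
    (huhat_t : DifferentiableAt ℝ (fun s : ℝ => uhat x s) t)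
    (huhat_x : DifferentiableAt ℝ (fun y : ℝ => uhat y t) x)
    (ha : Dhat * deriv (fun s : ℝ => uhat x s) t =
      deriv (fun y : ℝ => uhat y t) x
        + Dhat' * (x - 1) * deriv (fun y : ℝ => uhat y t) x)
    -- (b) p̂ is differentiable in t and x at (x,t) and satisfies its governing equation
    (hphat_t : DifferentiableAt ℝ (fun s : ℝ => phat x s) t)
    (hphat_x : DifferentiableAt ℝ (fun y : ℝ => phat y t) x)
    (hb : Dhat • deriv (fun s : ℝ => phat x s) t =
      deriv (fun y : ℝ => phat y t) x
        + (Φ x 0).mulVec (Dhat • futilde)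
        + (Dhat' * Dhat) • ∫ y in (0:ℝ)..x,
            (Φ x y).mulVec
              (f (phat y t, uhat y t)
                + fderiv ℝ (fun v : ℝ => f (phat y t, v)) (uhat y t)
                    ((y - 1) * deriv (fun z : ℝ => uhat z t) y)))
    (what : ℝ → ℝ → ℝ)
    (hwhat : ∀ (x' t' : ℝ), what x' t' = uhat x' t' - κ (phat x' t')) :
    Dhat * deriv (fun s : ℝ => what x s) t =
      deriv (fun y : ℝ => what y t) x
        + Dhat' * (x - 1) * deriv (fun y : ℝ => uhat y t) x
        - fderiv ℝ κ (phat x t)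
            ((Φ x 0).mulVec (Dhat • futilde)
              + (Dhat' * Dhat) • ∫ y in (0:ℝ)..x,
                  (Φ x y).mulVec
                    (f (phat y t, uhat y t)
                      + fderiv ℝ (fun v : ℝ => f (phat y t, v)) (uhat y t)
                          ((y - 1) * deriv (fun z : ℝ => uhat z t) y))) := by
  set L := fderiv ℝ κ (phat x t) with hL
  set S := (Φ x 0).mulVec (Dhat • futilde)
      + (Dhat' * Dhat) • ∫ y in (0:ℝ)..x,
          (Φ x y).mulVec
            (f (phat y t, uhat y t)
              + fderiv ℝ (fun v : ℝ => f (phat y t, v)) (uhat y t)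
                  ((y - 1) * deriv (fun z : ℝ => uhat z t) y)) with hS
  have hwt : deriv (fun s : ℝ => what x s) t
      = deriv (fun s : ℝ => uhat x s) t - L (deriv (fun s : ℝ => phat x s) t) := by
    have h1 : HasDerivAt (fun s : ℝ => κ (phat x s))
        (L (deriv (fun s : ℝ => phat x s) t)) t :=
      ((hκ (phat x t)).hasFDerivAt.comp_hasDerivAt t hphat_t.hasDerivAt)
    have h2 : HasDerivAt (fun s : ℝ => what x s)
        (deriv (fun s : ℝ => uhat x s) t - L (deriv (fun s : ℝ => phat x s) t)) t := by
      have := huhat_t.hasDerivAt.sub h1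
      simp only [hwhat]; exact this
    exact h2.deriv
  have hwx : deriv (fun y : ℝ => what y t) x
      = deriv (fun y : ℝ => uhat y t) x - L (deriv (fun y : ℝ => phat y t) x) := by
    have h1 : HasDerivAt (fun y : ℝ => κ (phat y t))
        (L (deriv (fun y : ℝ => phat y t) x)) x := by
      have := (hκ (phat x t)).hasFDerivAt.comp_hasDerivAt x hphat_x.hasDerivAt
      exact this
    have h2 : HasDerivAt (fun y : ℝ => what y t)
        (deriv (fun y : ℝ => uhat y t) x - L (deriv (fun y : ℝ => phat y t) x)) x := by
      have := huhat_x.hasDerivAt.sub h1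
      simp only [hwhat]; exact this
    exact h2.deriv
  have hb' : L (Dhat • deriv (fun s : ℝ => phat x s) t)
      = L (deriv (fun y : ℝ => phat y t) x) + L S := by
    rw [hb, hS]; simp [map_add, add_assoc]
  rw [hwt, hwx]
  have hsm : L (Dhat • deriv (fun s : ℝ => phat x s) t)
      = Dhat * L (deriv (fun s : ℝ => phat x s) t) := by
    rw [map_smul]; simp
  rw [hsm] at hb'
  have := ha
  nlinarith [hb', this]
end

section
/- Let f : ℝⁿ × ℝ → ℝⁿ be continuous, U : ℝ → ℝ continuous, D > 0, and let X : ℝ → ℝⁿ be differentiable with X'(s) = f(X(s), U(s−D)) for all s ∈ ℝ. Define u(x,t) = U(t + D(x−1)) and p(x,t) = X(t + Dx) for x ∈ [0,1], t ∈ ℝ. Then for all x ∈ [0,1] and t ∈ ℝ: p(x,t) = X(t) + D·∫₀ˣ f(p(y,t), u(y,t)) dy. -/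
/-- The exact distributed predictor: for the input-delay plant `Ẋ(s) = f(X(s), U(s-D))`,
the `Dx`-ahead prediction `p(x,t) = X(t + Dx)` satisfies the fixed-point integral
equation `p(x,t) = X(t) + D ∫₀ˣ f(p(y,t), u(y,t)) dy`, where `u(x,t) = U(t + D(x-1))`. -/
theorem statement_16 (n : ℕ) (f : (Fin n → ℝ) × ℝ → (Fin n → ℝ)) (hf : Continuous f)
    (U : ℝ → ℝ) (hU : Continuous U) (D : ℝ) (hD : 0 < D)
    (X : ℝ → (Fin n → ℝ)) (hX : ∀ s : ℝ, HasDerivAt X (f (X s, U (s - D))) s)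
    (u : ℝ → ℝ → ℝ) (p : ℝ → ℝ → (Fin n → ℝ))
    (hu : ∀ (x t : ℝ), u x t = U (t + D * (x - 1)))
    (hp : ∀ (x t : ℝ), p x t = X (t + D * x)) :
    ∀ x ∈ Set.Icc (0:ℝ) 1, ∀ t : ℝ,
      p x t = X t + D • ∫ y in (0:ℝ)..x, f (p y t, u y t) := by
  intro x _ t
  have hXcont : Continuous X :=
    continuous_iff_continuousAt.2 fun s => (hX s).continuousAt
  have hg : ∀ y : ℝ, HasDerivAt (fun y => X (t + D * y))
      (D • f (p y t, u y t)) y := by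
    intro y
    have h1 : HasDerivAt (fun y : ℝ => t + D * y) D y := by
      simpa using ((hasDerivAt_id y).const_mul D).const_add t
    have h2 := (hX (t + D * y)).scomp y h1
    have : p y t = X (t + D * y) := hp y t
    rw [hp, hu]
    have harg : t + D * y - D = t + D * (y - 1) := by ring
    simpa [harg, smul_eq_mul, mul_comm, Function.comp_def] using h2
  have hcont : Continuous fun y : ℝ => f (p y t, u y t) := by
    apply hf.comp
    apply Continuous.prodMk
    · simp only [hp]
      exact hXcont.comp (by continuity)
    · simp only [hu]
      exact hU.comp (by continuity)
  have hint : IntervalIntegrable (fun y => D • f (p y t, u y t))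
      MeasureTheory.volume 0 x :=
    (hcont.const_smul D).intervalIntegrable 0 x
  have := intervalIntegral.integral_eq_sub_of_hasDerivAt
    (f := fun y => X (t + D * y)) (fun y _ => hg y) hint
  rw [hp]
  rw [intervalIntegral.integral_smul] at this
  simp only [mul_zero, add_zero] at this
  rw [this]
  abel
end
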